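/- Let n > k ≥ 1 be integers, λ_1,…,λ_n pairwise distinct nonzero complex numbers, and A = (a_{ij}) an n×k complex matrix of rank k. In ℂ((z)) define u_j = z^{-(k-1)} Σ_{i=1}^n a_{ij} Σ_{r≥0} λ_i^r z^r for 1 ≤ j ≤ k. Then the ℂ-linear span of {u_1,…,u_k} ∪ {z^{-l} : l ≥ k} is a point of the Sato Grassmannian UGM. -/

import Mathlib

set_option synthInstance.maxHeartbeats 1000000
set_option maxHeartbeats 1000000

noncomputable section

/- Shortcut instances to speed up instance search for submodules of `ℂ((z))`. -/
instance (U : Submodule ℂ (LaurentSeries ℂ)) : AddCommGroup U := inferInstance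
instance (U : Submodule ℂ (LaurentSeries ℂ)) : Module ℂ U := inferInstance

/-- The variable `z` in the field of formal Laurent series `ℂ((z))`. -/
def zL : LaurentSeries ℂ := HahnSeries.single 1 1

/-- Truncation: keep only the coefficients of nonpositive powers of `z`.
This is the projection onto `V_φ = ℂ[z⁻¹]` along `V₀ = zℂ[[z]]`. -/
def trunc : LaurentSeries ℂ →ₗ[ℂ] LaurentSeries ℂ where
  toFun f :=
    { coeff := fun n => if n ≤ 0 then f.coeff n else 0
      isPWO_support' := f.isPWO_support.mono (by
        intro n hn
        simp only [Function.mem_support] at hn ⊢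
        intro h
        apply hn
        simp [h]) }
  map_add' f g := by
    ext n
    by_cases h : n ≤ 0 <;> simp [HahnSeries.coeff_add, h]
  map_smul' c f := by
    ext n
    by_cases h : n ≤ 0 <;> simp [HahnSeries.coeff_smul, h]

/-- `V_φ = ℂ[z⁻¹]`, realized as the range of the truncation map. -/
def Vphi : Submodule ℂ (LaurentSeries ℂ) := LinearMap.range trunc

/-- The projection `π : ℂ((z)) → V_φ` restricted to a subspace `U`. -/
def projU (U : Submodule ℂ (LaurentSeries ℂ)) : U →ₗ[ℂ] Vphi :=
  trunc.rangeRestrict.comp U.subtype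

/-- The Sato Grassmannian: subspaces `U ⊆ ℂ((z))` such that the kernel and the
cokernel of `π|_U : U → V_φ` are finite dimensional of the same dimension. -/
def UGM : Set (Submodule ℂ (LaurentSeries ℂ)) :=
  {U | FiniteDimensional ℂ (LinearMap.ker (projU U)) ∧
       FiniteDimensional ℂ (Vphi ⧸ LinearMap.range (projU U)) ∧
       Module.finrank ℂ (LinearMap.ker (projU U)) =
         Module.finrank ℂ (Vphi ⧸ LinearMap.range (projU U))}

namespace Sol

def geom (c : ℂ) : LaurentSeries ℂ where
  coeff m := if 0 ≤ m then c ^ m.toNat else 0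
  isPWO_support' := (Set.isPWO_iff_isWF.mpr
      (BddBelow.wellFoundedOn_lt (bddBelow_Ici (a := (0:ℤ))))).mono
    (by intro m hm; simp only [Function.mem_support] at hm
        by_contra h; simp only [Set.mem_Ici, not_le] at h
        exact hm (if_neg (not_le.2 h)))

lemma geom_coeff (c : ℂ) (m : ℤ) : (geom c).coeff m = if 0 ≤ m then c ^ m.toNat else 0 := rfl

lemma single_mul_coeff (g m : ℤ) (r : ℂ) (x : LaurentSeries ℂ) :
    (HahnSeries.single g r * x).coeff m = r * x.coeff (m - g) := by
  have := HahnSeries.coeff_single_mul_add (r := r) (x := x) (a := m - g) (b := g)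
  rwa [sub_add_cancel] at this

lemma algebraMap_eq (c : ℂ) :
    algebraMap ℂ (LaurentSeries ℂ) c = HahnSeries.single (0 : ℤ) c := by
  rw [HahnSeries.algebraMap_apply',
    show (algebraMap ℂ (PowerSeries ℂ)) c = PowerSeries.C c from rfl,
    HahnSeries.ofPowerSeries_C]
  rfl

lemma one_sub_inv (c : ℂ) :
    (1 - algebraMap ℂ (LaurentSeries ℂ) c * zL)⁻¹ = geom c := by
  refine inv_eq_of_mul_eq_one_right ?_
  ext m
  rw [sub_mul, one_mul, HahnSeries.coeff_sub, algebraMap_eq, zL, mul_assoc,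
    single_mul_coeff, single_mul_coeff, geom_coeff, geom_coeff]
  rcases lt_trichotomy m 0 with h | h | h
  · rw [if_neg (not_le.2 h), if_neg (by omega), HahnSeries.coeff_one, if_neg (by omega)]
    ring
  · subst h
    rw [if_pos le_rfl, if_neg (by norm_num), HahnSeries.coeff_one, if_pos rfl]
    simp
  · rw [if_pos h.le, if_pos (by omega), HahnSeries.coeff_one, if_neg (by omega)]
    have : m.toNat = (m - 1 - 0).toNat + 1 := by omega
    rw [this, pow_succ]
    ring_nf

lemma zL_zpow (a : ℤ) : zL ^ a = HahnSeries.single a 1 := by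
  have hp : ∀ nn : ℕ, zL ^ (nn : ℤ) = HahnSeries.single (nn : ℤ) 1 := by
    intro nn
    rw [zpow_natCast, zL, HahnSeries.single_pow, one_pow, nsmul_eq_mul, mul_one]
  rcases a with nn | nn
  · exact hp nn
  · rw [Int.negSucc_eq, zpow_neg, show ((nn:ℤ)+1) = ((nn+1 : ℕ) : ℤ) by push_cast; ring, hp]
    refine inv_eq_of_mul_eq_one_right ?_
    rw [HahnSeries.single_mul_single, add_neg_cancel, mul_one]
    rfl

lemma sum_coeff {α : Type*} (s : Finset α) (f : α → LaurentSeries ℂ) (m : ℤ) :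
    (∑ a ∈ s, f a).coeff m = ∑ a ∈ s, (f a).coeff m :=
  map_sum (HahnSeries.coeff.addMonoidHom m) f s

variable (n k : ℕ) (lam : Fin n → ℂ) (A : Matrix (Fin n) (Fin k) ℂ)

def u (j : Fin k) : LaurentSeries ℂ :=
  zL ^ (-((k : ℤ) - 1)) *
    ∑ i : Fin n, algebraMap ℂ (LaurentSeries ℂ) (A i j) *
      (1 - algebraMap ℂ (LaurentSeries ℂ) (lam i) * zL)⁻¹

lemma u_eq (j : Fin k) :
    u n k lam A j = HahnSeries.single (1 - (k:ℤ)) 1 *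
      ∑ i : Fin n, HahnSeries.single (0:ℤ) (A i j) * geom (lam i) := by
  rw [u, zL_zpow, neg_sub]
  congr 1
  refine Finset.sum_congr rfl fun i _ => ?_
  rw [one_sub_inv, algebraMap_eq]

lemma u_coeff (j : Fin k) (m : ℤ) :
    (u n k lam A j).coeff m =
      if 1 - (k:ℤ) ≤ m then ∑ i, A i j * lam i ^ (m - (1 - (k:ℤ))).toNat else 0 := by
  rw [u_eq, single_mul_coeff, one_mul, sum_coeff]
  by_cases h : 1 - (k:ℤ) ≤ m
  · rw [if_pos h]
    refine Finset.sum_congr rfl fun i _ => ?_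
    rw [single_mul_coeff, geom_coeff, sub_zero, if_pos (by omega)]
  · rw [if_neg h]
    refine Finset.sum_eq_zero fun i _ => ?_
    rw [single_mul_coeff, geom_coeff, sub_zero, if_neg (by omega), mul_zero]

def Phi : (Fin k → ℂ) →ₗ[ℂ] LaurentSeries ℂ :=
  Fintype.linearCombination ℂ (u n k lam A)

lemma Phi_apply (b : Fin k → ℂ) : Phi n k lam A b = ∑ j, b j • u n k lam A j := rfl

lemma Phi_coeff (b : Fin k → ℂ) (m : ℤ) :
    (Phi n k lam A b).coeff m =
      if 1 - (k:ℤ) ≤ m then ∑ i, A.mulVec b i * lam i ^ (m - (1 - (k:ℤ))).toNat else 0 := by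
  rw [Phi_apply, sum_coeff]
  simp only [HahnSeries.coeff_smul, u_coeff, smul_eq_mul]
  split_ifs with h
  · simp_rw [Finset.mul_sum]
    rw [Finset.sum_comm]
    refine Finset.sum_congr rfl fun i _ => ?_
    rw [Matrix.mulVec, dotProduct, Finset.sum_mul]
    refine Finset.sum_congr rfl fun j _ => ?_
    ring
  · simp

def coordk : LaurentSeries ℂ →ₗ[ℂ] (Fin k → ℂ) :=
  LinearMap.pi fun s : Fin k => HahnSeries.coeff.linearMap (-((s:ℕ):ℤ))

lemma coordk_apply (f : LaurentSeries ℂ) (s : Fin k) : coordk k f s = f.coeff (-((s:ℕ):ℤ)) := rfl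

def T : (Fin k → ℂ) →ₗ[ℂ] (Fin k → ℂ) := (coordk k).comp (Phi n k lam A)

lemma T_apply (b : Fin k → ℂ) (s : Fin k) :
    T n k lam A b s = (Phi n k lam A b).coeff (-((s:ℕ):ℤ)) := rfl

lemma vdm_inj (hinj : Function.Injective lam) (c : Fin n → ℂ)
    (h : ∀ m : Fin n, ∑ i, c i * lam i ^ (m : ℕ) = 0) : c = 0 := by
  have hdet : IsUnit (Matrix.vandermonde lam).det :=
    (Matrix.det_vandermonde_ne_zero_iff.2 hinj).isUnit
  have hv : Matrix.vecMul c (Matrix.vandermonde lam) = Matrix.vecMul 0 (Matrix.vandermonde lam) := by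
    funext m
    rw [Matrix.zero_vecMul]
    simpa [Matrix.vecMul, dotProduct, Matrix.vandermonde] using h m
  exact Matrix.vecMul_injective_iff_isUnit.2 ((Matrix.isUnit_iff_isUnit_det _).2 hdet) hv

lemma mulVec_inj (hA : A.rank = k) (b : Fin k → ℂ) (h : A.mulVec b = 0) : b = 0 := by
  have h1 := LinearMap.finrank_range_add_finrank_ker A.mulVecLin
  rw [Module.finrank_fintype_fun_eq_card, Fintype.card_fin] at h1
  have h2 : Module.finrank ℂ (LinearMap.range A.mulVecLin) = k := hA
  have h3 : Module.finrank ℂ (LinearMap.ker A.mulVecLin) = 0 := by omega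
  have h4 : LinearMap.ker A.mulVecLin = ⊥ := Submodule.finrank_eq_zero.1 h3
  have : b ∈ LinearMap.ker A.mulVecLin := by
    rw [LinearMap.mem_ker, Matrix.mulVecLin_apply, h]
  rwa [h4, Submodule.mem_bot] at this

lemma trunc_coeff (f : LaurentSeries ℂ) (m : ℤ) :
    (trunc f).coeff m = if m ≤ 0 then f.coeff m else 0 := rfl

lemma mem_Vphi_iff (f : LaurentSeries ℂ) : f ∈ Vphi ↔ ∀ m, 0 < m → f.coeff m = 0 := by
  constructor
  · rintro ⟨g, rfl⟩ m hm
    rw [trunc_coeff, if_neg (not_le.2 hm)]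
  · intro h
    refine ⟨f, ?_⟩
    ext m
    rw [trunc_coeff]
    by_cases hm : m ≤ 0
    · rw [if_pos hm]
    · rw [if_neg hm]
      exact (h m (not_le.1 hm)).symm

def Qk : Submodule ℂ (LaurentSeries ℂ) where
  carrier := {f | ∀ m : ℤ, -(k:ℤ) < m → f.coeff m = 0}
  zero_mem' := fun m _ => HahnSeries.coeff_zero
  add_mem' := fun hf hg m hm => by
    rw [HahnSeries.coeff_add, hf m hm, hg m hm, add_zero]
  smul_mem' := fun c f hf m hm => by
    rw [HahnSeries.coeff_smul, hf m hm, smul_zero]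

lemma mem_Qk {f : LaurentSeries ℂ} : f ∈ Qk k ↔ ∀ m : ℤ, -(k:ℤ) < m → f.coeff m = 0 :=
  Iff.rfl

lemma support_finite (f : LaurentSeries ℂ) (N : ℤ) (h : ∀ m, N < m → f.coeff m = 0) :
    f.support.Finite := by
  by_cases hf : f = 0
  · subst hf
    simp [HahnSeries.support_zero]
  · refine (Set.finite_Icc (f.isWF_support.min (HahnSeries.support_nonempty_iff.2 hf)) N).subset ?_
    intro m hm
    refine ⟨Set.IsWF.min_le _ _ hm, ?_⟩
    by_contra hc
    exact hm (h m (not_le.1 hc))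

lemma eq_sum_single (f : LaurentSeries ℂ) (h : f.support.Finite) :
    f = ∑ m ∈ h.toFinset, HahnSeries.single m (f.coeff m) := by
  ext g
  rw [sum_coeff, Finset.sum_eq_single g
    (fun m _ hmg => HahnSeries.coeff_single_of_ne (Ne.symm hmg))
    (fun hg => ?_)]
  · rw [HahnSeries.coeff_single_same]
  · rw [Set.Finite.mem_toFinset] at hg
    have : f.coeff g = 0 := by
      by_contra hc
      exact hg hc
    rw [this, HahnSeries.coeff_single_same]

lemma span_zk :
    Submodule.span ℂ {f : LaurentSeries ℂ | ∃ l : ℕ, k ≤ l ∧ f = zL ^ (-(l:ℤ))} = Qk k := by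
  apply le_antisymm
  · rw [Submodule.span_le]
    rintro f ⟨l, hl, rfl⟩
    intro m hm
    rw [zL_zpow, HahnSeries.coeff_single_of_ne (by omega : m ≠ -(l:ℤ))]
  · intro f hf
    have hfin : f.support.Finite := support_finite f (-(k:ℤ)) hf
    rw [eq_sum_single f hfin]
    refine Submodule.sum_mem _ fun m hm => ?_
    rw [Set.Finite.mem_toFinset] at hm
    have hmle : m ≤ -(k:ℤ) := by
      by_contra hc
      exact hm (hf m (by omega))
    have hsingle : HahnSeries.single m (f.coeff m) = f.coeff m • zL ^ m := by
      rw [zL_zpow]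
      ext g
      rw [HahnSeries.coeff_smul, HahnSeries.coeff_single, HahnSeries.coeff_single]
      split_ifs <;> simp
    rw [hsingle]
    refine Submodule.smul_mem _ _ (Submodule.subset_span ⟨(-m).toNat, by omega, ?_⟩)
    congr 1
    omega

end Sol

namespace Sol

variable (n k : ℕ) (lam : Fin n → ℂ) (A : Matrix (Fin n) (Fin k) ℂ)

theorem main (hk : 1 ≤ k) (hinj : Function.Injective lam) (hA : A.rank = k) :
    Submodule.span ℂ
      (Set.range (u n k lam A) ∪ {f | ∃ l : ℕ, k ≤ l ∧ f = zL ^ (-(l : ℤ))}) ∈ UGM := by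
  classical
  set S : Set (LaurentSeries ℂ) :=
    Set.range (u n k lam A) ∪ {f | ∃ l : ℕ, k ≤ l ∧ f = zL ^ (-(l : ℤ))} with hS
  set U : Submodule ℂ (LaurentSeries ℂ) := Submodule.span ℂ S with hU
  set Φ := Phi n k lam A with hΦ
  set T' := T n k lam A with hT'
  have hkz : (1:ℤ) ≤ (k:ℤ) := by exact_mod_cast hk
  have hUdecomp : U = Submodule.span ℂ (Set.range (u n k lam A)) ⊔ Qk k := by
    rw [hU, hS, Submodule.span_union, span_zk]
  have hmemU : ∀ b, Φ b ∈ U := by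
    intro b
    rw [hΦ, Phi_apply]
    exact Submodule.sum_mem _ fun j _ =>
      Submodule.smul_mem _ _ (Submodule.subset_span (Or.inl ⟨j, rfl⟩))
  have hQU : Qk k ≤ U := by
    rw [hUdecomp]
    exact le_sup_right
  have hPhi_low : ∀ b (m : ℤ), m < 1 - (k:ℤ) → (Φ b).coeff m = 0 := by
    intro b m hm
    rw [hΦ, Phi_coeff, if_neg (by omega)]
  have hPhi_inj : Function.Injective Φ := by
    rw [injective_iff_map_eq_zero]
    intro b hb
    have hc : A.mulVec b = 0 := by
      apply vdm_inj n lam hinj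
      intro m
      have h0 := Phi_coeff n k lam A b ((m:ℕ) + 1 - (k:ℤ))
      rw [← hΦ, hb, HahnSeries.coeff_zero, if_pos (by omega)] at h0
      have he : ((m:ℕ) + 1 - (k:ℤ) - (1 - (k:ℤ))) = ((m:ℕ):ℤ) := by ring
      rw [he, Int.toNat_natCast] at h0
      exact h0.symm
    exact mulVec_inj n k A hA b hc
  have hmem_iff : ∀ x : LaurentSeries ℂ, x ∈ U ↔ ∃ b, ∃ q ∈ Qk k, x = Φ b + q := by
    intro x
    rw [hUdecomp, Submodule.mem_sup]
    constructor
    · rintro ⟨y, hy, q, hq, rfl⟩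
      obtain ⟨b, rfl⟩ := (Submodule.mem_span_range_iff_exists_fun ℂ).1 hy
      exact ⟨b, q, hq, by rw [hΦ, Phi_apply]⟩
    · rintro ⟨b, q, hq, rfl⟩
      exact ⟨Φ b, (Submodule.mem_span_range_iff_exists_fun ℂ).2 ⟨b, by rw [hΦ, Phi_apply]⟩, q, hq, rfl⟩
  -- the restricted map
  set F : (Fin k → ℂ) →ₗ[ℂ] U := LinearMap.codRestrict U Φ hmemU with hF
  have hFinj : Function.Injective F := by
    intro a b hab
    exact hPhi_inj (congrArg Subtype.val hab)
  -- kernel identification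
  have hker : LinearMap.ker (projU U) = Submodule.map F (LinearMap.ker T') := by
    ext x
    simp only [LinearMap.mem_ker, Submodule.mem_map]
    constructor
    · intro hx
      have hxt : trunc x.val = 0 := congrArg Subtype.val hx
      obtain ⟨b, q, hq, hxval⟩ := (hmem_iff x.val).1 x.2
      have hxc : ∀ m : ℤ, m ≤ 0 → x.val.coeff m = 0 := by
        intro m hm
        have := congrArg (fun f => HahnSeries.coeff f m) hxt
        simpa [trunc_coeff, hm] using this
      have hq0 : q = 0 := by
        ext m
        rw [HahnSeries.coeff_zero]
        by_cases hm : -(k:ℤ) < m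
        · exact hq m hm
        · have h1 : x.val.coeff m = 0 := hxc m (by omega)
          have h2 : (Φ b).coeff m = 0 := hPhi_low b m (by omega)
          rw [hxval, HahnSeries.coeff_add, h2, zero_add] at h1
          exact h1
      rw [hq0, add_zero] at hxval
      refine ⟨b, ?_, Subtype.ext hxval.symm⟩
      funext s
      rw [hT', T_apply, ← hΦ, ← hxval, Pi.zero_apply]
      exact hxc _ (by omega)
    · rintro ⟨b, hb, rfl⟩
      apply Subtype.ext
      show trunc (Φ b) = 0
      ext m
      rw [trunc_coeff, HahnSeries.coeff_zero]
      by_cases hm : m ≤ 0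
      · rw [if_pos hm]
        by_cases hm2 : m < 1 - (k:ℤ)
        · exact hPhi_low b m hm2
        · have hsk : (-m).toNat < k := by omega
          have hs := congrFun hb ⟨(-m).toNat, hsk⟩
          rw [hT', T_apply, ← hΦ, Pi.zero_apply] at hs
          have hm' : -(((⟨(-m).toNat, hsk⟩ : Fin k) : ℕ) : ℤ) = m := by
            simp only [Fin.val_mk]
            omega
          rwa [hm'] at hs
      · rw [if_neg hm]
  -- range identification
  set θ : Vphi →ₗ[ℂ] ((Fin k → ℂ) ⧸ LinearMap.range T') :=
    (LinearMap.range T').mkQ.comp ((coordk k).comp Vphi.subtype) with hθ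
  have hθval : ∀ f : Vphi, θ f = Submodule.Quotient.mk (coordk k f.val) := fun f => rfl
  have hθsurj : Function.Surjective θ := by
    intro y
    obtain ⟨c, rfl⟩ := Submodule.mkQ_surjective _ y
    refine ⟨⟨∑ s : Fin k, HahnSeries.single (-((s:ℕ):ℤ)) (c s), ?_⟩, ?_⟩
    · rw [mem_Vphi_iff]
      intro m hm
      rw [sum_coeff]
      refine Finset.sum_eq_zero fun s _ => HahnSeries.coeff_single_of_ne ?_
      have : (0:ℤ) ≤ ((s:ℕ):ℤ) := Int.natCast_nonneg _
      omega
    · rw [hθval]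
      congr 1
      funext s'
      rw [coordk_apply, sum_coeff, Finset.sum_eq_single s'
        (fun s _ hne => HahnSeries.coeff_single_of_ne ?_)
        (fun hg => absurd (Finset.mem_univ s') hg)]
      · exact HahnSeries.coeff_single_same _ _
      · intro hc
        apply hne
        apply Fin.ext
        omega
  have hrange : LinearMap.range (projU U) = LinearMap.ker θ := by
    ext f
    simp only [LinearMap.mem_range, LinearMap.mem_ker]
    constructor
    · rintro ⟨x, rfl⟩
      obtain ⟨b, q, hq, hxval⟩ := (hmem_iff x.val).1 x.2
      have hval : (projU U x).val = trunc x.val := rfl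
      have hcoord : coordk k (trunc x.val) = T' b := by
        funext s
        have hsk : ((s:ℕ):ℤ) < (k:ℤ) := by exact_mod_cast s.isLt
        have hs0 : (0:ℤ) ≤ ((s:ℕ):ℤ) := Int.natCast_nonneg _
        rw [coordk_apply, trunc_coeff, if_pos (by omega), hxval, HahnSeries.coeff_add,
          hq _ (by omega), add_zero, hT', T_apply, ← hΦ]
      rw [hθval, hval, hcoord]
      rw [Submodule.Quotient.mk_eq_zero]
      exact ⟨b, rfl⟩
    · intro hf
      rw [hθval, Submodule.Quotient.mk_eq_zero] at hf
      obtain ⟨b, hb⟩ := hf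
      set q : LaurentSeries ℂ := f.val - trunc (Φ b) with hqdef
      have hfv : ∀ m : ℤ, 0 < m → f.val.coeff m = 0 := (mem_Vphi_iff _).1 f.2
      have hqQ : q ∈ Qk k := by
        intro m hm
        rw [hqdef, HahnSeries.coeff_sub, trunc_coeff]
        by_cases hm0 : m ≤ 0
        · rw [if_pos hm0]
          have hsk : (-m).toNat < k := by omega
          have hs := congrFun hb ⟨(-m).toNat, hsk⟩
          rw [hT', T_apply, ← hΦ, coordk_apply] at hs
          have hm' : -(((⟨(-m).toNat, hsk⟩ : Fin k) : ℕ) : ℤ) = m := by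
            simp only [Fin.val_mk]
            omega
          rw [hm'] at hs
          rw [← hs, sub_self]
        · rw [if_neg hm0, sub_zero, hfv m (by omega)]
      have hqV : trunc q = q := by
        ext m
        rw [trunc_coeff]
        by_cases hm : m ≤ 0
        · rw [if_pos hm]
        · rw [if_neg hm]
          exact (hqQ m (by omega)).symm
      refine ⟨⟨Φ b + q, Submodule.add_mem _ (hmemU b) (hQU hqQ)⟩, ?_⟩
      apply Subtype.ext
      show trunc (Φ b + q) = f.val
      rw [map_add, hqV, hqdef]
      abel
  -- assemble
  have eK : (LinearMap.ker (projU U)) ≃ₗ[ℂ] (LinearMap.ker T') :=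
    (LinearEquiv.ofEq _ _ hker).trans
      (Submodule.equivMapOfInjective F hFinj (LinearMap.ker T')).symm
  have eC : (Vphi ⧸ LinearMap.range (projU U)) ≃ₗ[ℂ] ((Fin k → ℂ) ⧸ LinearMap.range T') :=
    (Submodule.quotEquivOfEq _ _ hrange).trans (θ.quotKerEquivOfSurjective hθsurj)
  have fd1 : FiniteDimensional ℂ (LinearMap.ker (projU U)) := Module.Finite.equiv eK.symm
  have fd2 : FiniteDimensional ℂ (Vphi ⧸ LinearMap.range (projU U)) := Module.Finite.equiv eC.symm
  refine ⟨fd1, fd2, ?_⟩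
  rw [eK.finrank_eq, eC.finrank_eq]
  have h1 := LinearMap.finrank_range_add_finrank_ker T'
  have h2 := Submodule.finrank_quotient_add_finrank (LinearMap.range T')
  omega

end Sol


/-- Sato's theorem on `(n,k)` soliton frames: the span of the
functions `z^{-(k-1)} Σ_i a_{ij} (1-λ_i z)^{-1}` (`1 ≤ j ≤ k`) together with
`z^{-l}` (`l ≥ k`) is a point of the Sato Grassmannian. -/
theorem soliton_frame_mem_UGM (n k : ℕ) (hk : 1 ≤ k) (hkn : k < n)
    (lam : Fin n → ℂ) (hne : ∀ i, lam i ≠ 0) (hinj : Function.Injective lam)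
    (A : Matrix (Fin n) (Fin k) ℂ) (hA : A.rank = k) :
    Submodule.span ℂ
      ((Set.range fun j : Fin k =>
          zL ^ (-((k : ℤ) - 1)) *
            ∑ i : Fin n, algebraMap ℂ (LaurentSeries ℂ) (A i j) *
              (1 - algebraMap ℂ (LaurentSeries ℂ) (lam i) * zL)⁻¹) ∪
        {f | ∃ l : ℕ, k ≤ l ∧ f = zL ^ (-(l : ℤ))}) ∈ UGM :=
  Sol.main n k lam A hk hinj hA

end
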